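/- Let T be a triangle with vertices a, b, c and let d be a point in the interior of T. Then the three triangles abd, bcd, cad partition T, each of the angles of d in these triangles is less than π, and the reflex condition holds: d is a reflex vertex of the quadrilateral a b d c traversed in that order, i.e., the interior angle of the simple polygon a, b, d, c at d exceeds π. -/

import Mathlib

open EuclideanGeometry Real

namespace TriPartAux


noncomputable abbrev EE := EuclideanSpace ℝ (Fin 2)

def lf (p q x : EE) : ℝ := (q 0 - p 0) * (x 1 - p 1) - (q 1 - p 1) * (x 0 - p 0)

lemma lf_self_left (p q : EE) : lf p q p = 0 := by unfold lf; ring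
lemma lf_self_right (p q : EE) : lf p q q = 0 := by unfold lf; ring
lemma lf_cycle (p q x : EE) : lf p q x = lf q x p := by unfold lf; ring
lemma lf_swap (p q x : EE) : lf p q x = - lf p x q := by unfold lf; ring

lemma lf_combo (p q : EE) (u v w : ℝ) (huvw : u + v + w = 1) (x y z : EE) :
    lf p q (u • x + v • y + w • z) = u * lf p q x + v * lf p q y + w * lf p q z := by
  simp only [lf, PiLp.add_apply, PiLp.smul_apply, smul_eq_mul]
  linear_combination ((q 0 - p 0) * p 1 - (q 1 - p 1) * p 0) * huvw

lemma collinear_of_lf_eq_zero {p q x : EE} (h : lf p q x = 0) :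
    Collinear ℝ ({p, q, x} : Set EE) := by
  rcases eq_or_ne ((q 0 - p 0) ^ 2 + (q 1 - p 1) ^ 2) 0 with h0 | h0
  · have hA : q 0 - p 0 = 0 := by nlinarith [sq_nonneg (q 0 - p 0), sq_nonneg (q 1 - p 1)]
    have hB : q 1 - p 1 = 0 := by nlinarith [sq_nonneg (q 0 - p 0), sq_nonneg (q 1 - p 1)]
    have hpq : q = p := by
      ext i
      fin_cases i
      · simpa using sub_eq_zero.1 hA
      · simpa using sub_eq_zero.1 hB
    rw [hpq, Set.insert_comm, Set.insert_idem]
    rw [Set.pair_comm]; exact collinear_pair ℝ x p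
  · apply (collinear_iff_of_mem (Set.mem_insert p _)).2
    refine ⟨q - p, fun y hy => ?_⟩
    have key : ∀ r : ℝ, (∀ i : Fin 2, y i - p i = r * (q i - p i)) → ∃ r : ℝ, y = r • (q - p) +ᵥ p := by
      intro r hr
      refine ⟨r, ?_⟩
      ext i
      have := hr i
      simp only [vadd_eq_add, PiLp.add_apply, PiLp.smul_apply, PiLp.sub_apply, smul_eq_mul]
      linarith
    rcases hy with rfl | rfl | rfl
    · exact key 0 (by intro i; ring)
    · exact key 1 (by intro i; ring)
    · refine key (((y 0 - p 0) * (q 0 - p 0) + (y 1 - p 1) * (q 1 - p 1)) /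
        ((q 0 - p 0) ^ 2 + (q 1 - p 1) ^ 2)) ?_
      intro i
      unfold lf at h
      fin_cases i
      · simp only [Fin.isValue, Fin.zero_eta, Fin.mk_one]; field_simp; linear_combination (-(q 1 - p 1)) * h
      · simp only [Fin.isValue, Fin.zero_eta, Fin.mk_one]; field_simp; linear_combination (q 0 - p 0) * h


lemma mem_hull3 {p q r x : EE} :
    x ∈ convexHull ℝ ({p, q, r} : Set EE) ↔
      ∃ u v w : ℝ, 0 ≤ u ∧ 0 ≤ v ∧ 0 ≤ w ∧ u + v + w = 1 ∧ x = u • p + v • q + w • r := by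
  constructor
  · intro hx
    rw [show ({p, q, r} : Set EE) = insert p {q, r} from rfl,
      convexHull_insert (by simp), convexHull_pair] at hx
    rw [mem_convexJoin] at hx
    obtain ⟨p', hp', y, hy, hxy⟩ := hx
    rw [Set.mem_singleton_iff] at hp'
    subst hp'
    obtain ⟨s, t, hs, ht, hst, hy⟩ := hy
    obtain ⟨u, v', hu, hv', huv, hxe⟩ := hxy
    refine ⟨u, v' * s, v' * t, hu, by positivity, by positivity, by nlinarith, ?_⟩
    rw [← hxe, ← hy]
    simp only [smul_add, smul_smul]
    abel
  · rintro ⟨u, v, w, hu, hv, hw, huvw, rfl⟩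
    have := (convex_convexHull ℝ ({p, q, r} : Set EE)).sum_mem (t := Finset.univ)
      (w := ![u, v, w]) (z := ![p, q, r]) ?_ ?_ ?_
    · simpa [Fin.sum_univ_three] using this
    · intro i _; fin_cases i <;> simpa
    · simp [Fin.sum_univ_three, huvw]
    · intro i _
      fin_cases i <;> · apply subset_convexHull; simp

lemma interior_pos {p q r : EE} (hr : lf p q r ≠ 0) {x : EE}
    (hx : x ∈ interior (convexHull ℝ ({p, q, r} : Set EE))) :
    0 < lf p q r * lf p q x := by
  set C := lf p q r with hC
  have hcombo2 : ∀ (s t : ℝ), s + t = 1 → ∀ y z : EE,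
      lf p q (s • y + t • z) = s * lf p q y + t * lf p q z := by
    intro s t hst y z
    have h := lf_combo p q s t 0 (by linarith) y z z
    simpa using h
  have hconv : Convex ℝ {y : EE | 0 ≤ C * lf p q y} := by
    intro y hy z hz s t hs ht hst
    simp only [Set.mem_setOf_eq] at hy hz ⊢
    rw [hcombo2 s t hst y z]
    nlinarith [mul_nonneg hs hy, mul_nonneg ht hz]
  have hsub : convexHull ℝ ({p, q, r} : Set EE) ⊆ {y : EE | 0 ≤ C * lf p q y} := by
    apply convexHull_min ?_ hconv
    intro y hy
    simp only [Set.mem_insert_iff, Set.mem_singleton_iff] at hy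
    have hzl : ∀ z : EE, lf z q z = 0 := by intro z; unfold lf; ring
    have hzr : ∀ z : EE, lf p z z = 0 := by intro z; unfold lf; ring
    rcases hy with h | h | h <;> rw [Set.mem_setOf_eq, h]
    · rw [hzl p]; simp
    · rw [hzr q]; simp
    · rw [← hC]; exact mul_self_nonneg C
  have hle : 0 ≤ C * lf p q x := hsub (interior_subset hx)
  rcases hle.lt_or_eq with h | h
  · exact h
  exfalso
  -- build the perturbation direction
  have hAB : 0 < (q 0 - p 0) ^ 2 + (q 1 - p 1) ^ 2 := by
    rcases lt_or_eq_of_le (by positivity : (0:ℝ) ≤ (q 0 - p 0) ^ 2 + (q 1 - p 1) ^ 2) with h' | h'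
    · exact h'
    · exfalso
      apply hr
      show lf p q r = 0
      have hA : q 0 - p 0 = 0 := by nlinarith [sq_nonneg (q 0 - p 0), sq_nonneg (q 1 - p 1)]
      have hB : q 1 - p 1 = 0 := by nlinarith [sq_nonneg (q 0 - p 0), sq_nonneg (q 1 - p 1)]
      unfold lf; rw [hA, hB]; ring
  set D : ℝ := C ^ 2 * ((q 0 - p 0) ^ 2 + (q 1 - p 1) ^ 2) with hD
  have hDpos : 0 < D := by
    have : C ^ 2 > 0 := sq_pos_of_ne_zero hr
    positivity
  set v : EE := EuclideanSpace.single (0 : Fin 2) (C * (q 1 - p 1) / D) +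
      EuclideanSpace.single (1 : Fin 2) (-(C * (q 0 - p 0)) / D) with hv
  have hv0 : v 0 = C * (q 1 - p 1) / D := by
    simp [hv, PiLp.add_apply, EuclideanSpace.single_apply]
  have hv1 : v 1 = -(C * (q 0 - p 0)) / D := by
    simp [hv, PiLp.add_apply, EuclideanSpace.single_apply]
  have key : ∀ t : ℝ, C * lf p q (x + t • v) = C * lf p q x - t := by
    intro t
    unfold lf
    simp only [PiLp.add_apply, PiLp.smul_apply, smul_eq_mul, hv0, hv1]
    field_simp
    ring
  have hvne : v ≠ 0 := by
    intro h0
    have h1 := key 1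
    rw [h0] at h1
    simp only [smul_zero, add_zero] at h1
    linarith
  obtain ⟨ε, hε, hball⟩ := Metric.isOpen_iff.1 isOpen_interior x hx
  have hnv : 0 < ‖v‖ := norm_pos_iff.2 hvne
  set t : ℝ := ε / (2 * ‖v‖) with htdef
  have ht : 0 < t := by positivity
  have hmem : x + t • v ∈ Metric.ball x ε := by
    rw [Metric.mem_ball, dist_eq_norm]
    have : x + t • v - x = t • v := by abel
    rw [this, norm_smul, Real.norm_eq_abs, abs_of_pos ht]
    rw [htdef]
    rw [div_mul_eq_mul_div, mul_comm]
    rw [mul_div_assoc]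
    calc ‖v‖ * (ε / (2 * ‖v‖)) = ε / 2 := by field_simp
      _ < ε := by linarith
  have hin := hsub (interior_subset (hball hmem))
  simp only [Set.mem_setOf_eq] at hin
  rw [key t] at hin
  linarith

lemma set_rot (x y z : EE) : ({x, y, z} : Set EE) = {y, z, x} := by
  ext w; simp only [Set.mem_insert_iff, Set.mem_singleton_iff]; tauto

lemma set_swap (x y z : EE) : ({x, y, z} : Set EE) = {x, z, y} := by
  ext w; simp only [Set.mem_insert_iff, Set.mem_singleton_iff]; tauto

lemma disj (p q r1 r2 : EE) (h1 : lf p q r1 ≠ 0) (h2 : lf p q r2 ≠ 0)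
    (hopp : lf p q r1 * lf p q r2 < 0) :
    Disjoint (interior (convexHull ℝ ({p, q, r1} : Set EE)))
      (interior (convexHull ℝ ({p, q, r2} : Set EE))) := by
  rw [Set.disjoint_left]
  intro x hx1 hx2
  have T1 := interior_pos h1 hx1
  have T2 := interior_pos h2 hx2
  nlinarith [mul_pos T1 T2, sq_nonneg (lf p q x)]

lemma angle_lt (d x y : EE) (h : lf x y d ≠ 0) : ∠ x d y < π := by
  refine lt_of_le_of_ne (EuclideanGeometry.angle_le_pi _ _ _) ?_
  intro heq
  have hsb : Sbtw ℝ x d y := EuclideanGeometry.angle_eq_pi_iff_sbtw.1 heq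
  obtain ⟨s, t, hs, ht, hst, hdd⟩ := hsb.wbtw.mem_segment
  apply h
  have hc : lf x y (s • x + t • y + (0:ℝ) • y) = s * lf x y x + t * lf x y y + 0 * lf x y y :=
    lf_combo x y s t 0 (by linarith) x y y
  have hd' : s • x + t • y + (0:ℝ) • y = d := by rw [← hdd]; simp
  rw [← hd', hc, lf_self_left, lf_self_right]; ring

end TriPartAux

open TriPartAux in
set_option maxHeartbeats 2000000 in
/-- For `d` in the interior of triangle `abc`: the three triangles `abd`, `bcd`,
`cad` partition the triangle (their union is the triangle and their interiors are
pairwise disjoint), each of the angles at `d` in these triangles is less than `π`,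
and the reflex condition holds: the interior angle at `d` of the simple polygon
`a b d c`, which equals `2π` minus the angle `b d c`, exceeds `π`. -/
theorem point_in_triangle_partition_and_reflex
    (a b c d : EuclideanSpace ℝ (Fin 2))
    (habc : ¬ Collinear ℝ ({a, b, c} : Set (EuclideanSpace ℝ (Fin 2))))
    (hd : d ∈ interior (convexHull ℝ ({a, b, c} : Set (EuclideanSpace ℝ (Fin 2))))) :
    (convexHull ℝ ({a, b, c} : Set (EuclideanSpace ℝ (Fin 2))) =
        convexHull ℝ ({a, b, d} : Set (EuclideanSpace ℝ (Fin 2))) ∪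
        convexHull ℝ ({b, c, d} : Set (EuclideanSpace ℝ (Fin 2))) ∪
        convexHull ℝ ({c, a, d} : Set (EuclideanSpace ℝ (Fin 2)))) ∧
    (Disjoint (interior (convexHull ℝ ({a, b, d} : Set (EuclideanSpace ℝ (Fin 2)))))
        (interior (convexHull ℝ ({b, c, d} : Set (EuclideanSpace ℝ (Fin 2))))) ∧
      Disjoint (interior (convexHull ℝ ({b, c, d} : Set (EuclideanSpace ℝ (Fin 2)))))
        (interior (convexHull ℝ ({c, a, d} : Set (EuclideanSpace ℝ (Fin 2))))) ∧
      Disjoint (interior (convexHull ℝ ({a, b, d} : Set (EuclideanSpace ℝ (Fin 2)))))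
        (interior (convexHull ℝ ({c, a, d} : Set (EuclideanSpace ℝ (Fin 2)))))) ∧
    (∠ a d b < π ∧ ∠ b d c < π ∧ ∠ c d a < π) ∧
    π < 2 * π - ∠ b d c := by
  -- nondegeneracy of the three sides
  have hab : lf a b c ≠ 0 := fun h => habc (collinear_of_lf_eq_zero h)
  have hbc : lf b c a ≠ 0 := fun h => habc (by rw [set_rot]; exact collinear_of_lf_eq_zero h)
  have hca : lf c a b ≠ 0 := fun h => habc (by rw [set_rot, set_rot]; exact collinear_of_lf_eq_zero h)
  have hd2 : d ∈ interior (convexHull ℝ ({b, c, a} : Set EE)) := by rwa [← set_rot]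
  have hd3 : d ∈ interior (convexHull ℝ ({c, a, b} : Set EE)) := by rwa [← set_rot, ← set_rot]
  have S1 := interior_pos hab hd
  have S2 := interior_pos hbc hd2
  have S3 := interior_pos hca hd3
  have hd' : d ∈ convexHull ℝ ({a, b, c} : Set EE) := interior_subset hd
  obtain ⟨μ0, μ1, μ2, hμ0', hμ1', hμ2', hμsum, hdeq⟩ := mem_hull3.1 hd'
  -- lf values of d along the sides
  have habd : lf a b d = μ2 * lf a b c := by
    rw [hdeq, lf_combo a b μ0 μ1 μ2 hμsum a b c, lf_self_left, lf_self_right]; ring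
  have hbcd : lf b c d = μ0 * lf b c a := by
    rw [hdeq, lf_combo b c μ0 μ1 μ2 hμsum a b c, lf_self_left, lf_self_right]; ring
  have hcad : lf c a d = μ1 * lf c a b := by
    rw [hdeq, lf_combo c a μ0 μ1 μ2 hμsum a b c, lf_self_left, lf_self_right]; ring
  have hμ2 : 0 < μ2 := by nlinarith [sq_nonneg (lf a b c), habd ▸ S1]
  have hμ0 : 0 < μ0 := by nlinarith [sq_nonneg (lf b c a), hbcd ▸ S2]
  have hμ1 : 0 < μ1 := by nlinarith [sq_nonneg (lf c a b), hcad ▸ S3]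
  have habd' : lf a b d ≠ 0 := by rw [habd]; exact mul_ne_zero (ne_of_gt hμ2) hab
  have hbcd' : lf b c d ≠ 0 := by rw [hbcd]; exact mul_ne_zero (ne_of_gt hμ0) hbc
  have hcad' : lf c a d ≠ 0 := by rw [hcad]; exact mul_ne_zero (ne_of_gt hμ1) hca
  refine ⟨?_, ?_, ?_, ?_⟩
  · -- union
    apply Set.Subset.antisymm
    · intro x hx
      obtain ⟨l0, l1, l2, hl0, hl1, hl2, hlsum, hxeq⟩ := mem_hull3.1 hx
      set t0 : ℝ := l0 / μ0 with ht0def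
      set t1 : ℝ := l1 / μ1 with ht1def
      set t2 : ℝ := l2 / μ2 with ht2def
      have e0 : t0 * μ0 = l0 := div_mul_cancel₀ _ (ne_of_gt hμ0)
      have e1 : t1 * μ1 = l1 := div_mul_cancel₀ _ (ne_of_gt hμ1)
      have e2 : t2 * μ2 = l2 := div_mul_cancel₀ _ (ne_of_gt hμ2)
      have ht0 : 0 ≤ t0 := div_nonneg hl0 (le_of_lt hμ0)
      have ht1 : 0 ≤ t1 := div_nonneg hl1 (le_of_lt hμ1)
      have ht2 : 0 ≤ t2 := div_nonneg hl2 (le_of_lt hμ2)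
      rcases le_total t0 t1 with h01 | h10
      · rcases le_total t0 t2 with h02 | h20
        · -- t0 min : x ∈ hull {b, c, d}
          refine Or.inl (Or.inr (mem_hull3.2 ⟨l1 - t0 * μ1, l2 - t0 * μ2, t0, ?_, ?_, ht0, ?_, ?_⟩))
          · nlinarith
          · nlinarith
          · nlinarith
          · rw [hxeq, hdeq]
            match_scalars
            · linear_combination -e0
            · ring
            · ring
        · -- t2 min : x ∈ hull {a, b, d}
          refine Or.inl (Or.inl (mem_hull3.2 ⟨l0 - t2 * μ0, l1 - t2 * μ1, t2, ?_, ?_, ht2, ?_, ?_⟩))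
          · nlinarith
          · nlinarith
          · nlinarith
          · rw [hxeq, hdeq]
            match_scalars
            · ring
            · ring
            · linear_combination -e2
      · rcases le_total t1 t2 with h12 | h21
        · -- t1 min : x ∈ hull {c, a, d}
          refine Or.inr (mem_hull3.2 ⟨l2 - t1 * μ2, l0 - t1 * μ0, t1, ?_, ?_, ht1, ?_, ?_⟩)
          · nlinarith
          · nlinarith
          · nlinarith
          · rw [hxeq, hdeq]
            match_scalars
            · ring
            · linear_combination -e1
            · ring
        · -- t2 min again
          refine Or.inl (Or.inl (mem_hull3.2 ⟨l0 - t2 * μ0, l1 - t2 * μ1, t2, ?_, ?_, ht2, ?_, ?_⟩))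
          · nlinarith
          · nlinarith
          · nlinarith
          · rw [hxeq, hdeq]
            match_scalars
            · ring
            · ring
            · linear_combination -e2
    · intro x hx
      have hsub : ∀ p q : EE, p ∈ ({a, b, c} : Set EE) → q ∈ ({a, b, c} : Set EE) →
          convexHull ℝ ({p, q, d} : Set EE) ⊆ convexHull ℝ ({a, b, c} : Set EE) := by
        intro p q hp hq
        apply convexHull_min _ (convex_convexHull ℝ _)
        rintro y (rfl | rfl | rfl)
        · exact subset_convexHull ℝ _ hp
        · exact subset_convexHull ℝ _ hq
        · exact hd'
      rcases hx with (hx | hx) | hx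
      · exact hsub a b (by simp) (by simp) hx
      · exact hsub b c (by simp) (by simp) hx
      · exact hsub c a (by simp) (by simp) hx
  · -- disjointness
    -- common line b d : lf b d a and lf b d c
    have r1 : lf b d a = lf a b d := (lf_cycle a b d).symm
    have r2 : lf b d c = - lf b c d := lf_swap b d c
    have hbda : lf b d a ≠ 0 := by rw [r1]; exact habd'
    have hbdc : lf b d c ≠ 0 := by rw [r2]; exact neg_ne_zero.2 hbcd'
    have hline : μ0 * lf b d a + μ2 * lf b d c = 0 := by
      have h0 : lf b d d = 0 := lf_self_right b d
      have := lf_combo b d μ0 μ1 μ2 hμsum a b c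
      rw [← hdeq, h0, lf_self_left] at this
      have r3 : lf b d c = lf b d c := rfl
      nlinarith [this]
    have hopp1 : lf b d a * lf b d c < 0 := by
      have hw2 : 0 < lf b d c ^ 2 := sq_pos_of_ne_zero hbdc
      have hkey : μ0 * (lf b d a * lf b d c) = -(μ2 * lf b d c ^ 2) := by
        linear_combination lf b d c * hline
      nlinarith
    have hD1 : Disjoint (interior (convexHull ℝ ({a, b, d} : Set EE)))
        (interior (convexHull ℝ ({b, c, d} : Set EE))) := by
      have := disj b d a c hbda hbdc hopp1
      rwa [(set_rot a b d).symm, (set_swap b c d).symm] at this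
    -- common line c d : lf c d b and lf c d a
    have r4 : lf c d b = lf b c d := (lf_cycle b c d).symm
    have r5 : lf c d a = - lf c a d := lf_swap c d a
    have hcdb : lf c d b ≠ 0 := by rw [r4]; exact hbcd'
    have hcda : lf c d a ≠ 0 := by rw [r5]; exact neg_ne_zero.2 hcad'
    have hline2 : μ0 * lf c d a + μ1 * lf c d b = 0 := by
      have := lf_combo c d μ0 μ1 μ2 hμsum a b c
      rw [← hdeq, lf_self_right, lf_self_left] at this
      nlinarith [this]
    have hopp2 : lf c d b * lf c d a < 0 := by
      have hw2 : 0 < lf c d a ^ 2 := sq_pos_of_ne_zero hcda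
      have hkey : μ1 * (lf c d b * lf c d a) = -(μ0 * lf c d a ^ 2) := by
        linear_combination lf c d a * hline2
      nlinarith
    have hD2 : Disjoint (interior (convexHull ℝ ({b, c, d} : Set EE)))
        (interior (convexHull ℝ ({c, a, d} : Set EE))) := by
      have := disj c d b a hcdb hcda hopp2
      rwa [(set_rot b c d).symm, (set_swap c a d).symm] at this
    -- common line a d : lf a d b and lf a d c
    have r6 : lf a d b = - lf a b d := lf_swap a d b
    have r7 : lf a d c = lf c a d := by rw [lf_cycle c a d]
    have hadb : lf a d b ≠ 0 := by rw [r6]; exact neg_ne_zero.2 habd'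
    have hadc : lf a d c ≠ 0 := by rw [r7]; exact hcad'
    have hline3 : μ1 * lf a d b + μ2 * lf a d c = 0 := by
      have := lf_combo a d μ0 μ1 μ2 hμsum a b c
      rw [← hdeq, lf_self_right, lf_self_left] at this
      nlinarith [this]
    have hopp3 : lf a d b * lf a d c < 0 := by
      have hw2 : 0 < lf a d c ^ 2 := sq_pos_of_ne_zero hadc
      have hkey : μ1 * (lf a d b * lf a d c) = -(μ2 * lf a d c ^ 2) := by
        linear_combination lf a d c * hline3
      nlinarith
    have hD3 : Disjoint (interior (convexHull ℝ ({a, b, d} : Set EE)))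
        (interior (convexHull ℝ ({c, a, d} : Set EE))) := by
      have := disj a d b c hadb hadc hopp3
      rwa [(set_swap a b d).symm, (set_rot c a d).symm] at this
    exact ⟨hD1, hD2, hD3⟩
  · exact ⟨angle_lt d a b habd', angle_lt d b c hbcd', angle_lt d c a hcad'⟩
  · have := angle_lt d b c hbcd'
    linarith
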